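/- Let κ₀, θ∞ ∈ ℂ, let U ⊆ ℂ be a nonempty open connected set, and let f, g : U → ℂ be differentiable functions with f(t) ≠ 0 for all t ∈ U that solve the Okamoto Hamiltonian system for P_IV with parameters κ₀, θ∞. Define y(t) = f(t) and z(t) = f(t)²/2 − f(t)g(t) + f(t)·t + κ₀. Then y, z are differentiable and solve the Jimbo–Miwa Hamiltonian system for P_IV on U with parameters Θ₀ = κ₀/2 and Θ∞ = 1 + θ∞ − κ₀/2. -/

import Mathlib

open Complex

/-- the change of variables `y = f`, `z = f²/2 − fg + ft + κ₀` maps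
solutions of the Okamoto Hamiltonian system for P_IV with parameters `κ₀, θ∞` to
solutions of the Jimbo–Miwa Hamiltonian system for P_IV with parameters
`Θ₀ = κ₀/2`, `Θ∞ = 1 + θ∞ − κ₀/2`. -/
theorem okamoto_to_jimbo_miwa_PIV
    (κ₀ θoo : ℂ) (U : Set ℂ)
    (hUo : IsOpen U) (hUne : U.Nonempty) (hUc : IsPreconnected U)
    (f g : ℂ → ℂ)
    (hf0 : ∀ t ∈ U, f t ≠ 0)
    (hf : ∀ t ∈ U, HasDerivAt f (4 * f t * g t - (f t) ^ 2 - 2 * t * f t - 2 * κ₀) t)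
    (hg : ∀ t ∈ U, HasDerivAt g (-2 * (g t) ^ 2 + 2 * f t * g t + 2 * t * g t - θoo) t)
    (Θ₀ Θoo : ℂ) (hΘ₀ : Θ₀ = κ₀ / 2) (hΘoo : Θoo = 1 + θoo - κ₀ / 2)
    (y z : ℂ → ℂ)
    (hy_def : ∀ t, y t = f t)
    (hz_def : ∀ t, z t = (f t) ^ 2 / 2 - f t * g t + f t * t + κ₀) :
    ∀ t ∈ U,
      HasDerivAt y (-4 * z t + (y t) ^ 2 + 2 * t * y t + 4 * Θ₀) t ∧
      HasDerivAt z
        (-(2 / y t) * (z t) ^ 2 + (-(y t) + 4 * Θ₀ / y t) * z t + (Θ₀ + Θoo) * y t) t := by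
  intro t ht
  have hy_fun : y = f := funext hy_def
  have hz_fun : z = fun s => (f s) ^ 2 / 2 - f s * g s + f s * s + κ₀ := funext hz_def
  have hft := hf t ht
  have hgt := hg t ht
  have hne := hf0 t ht
  set F := 4 * f t * g t - (f t) ^ 2 - 2 * t * f t - 2 * κ₀ with hF
  set G := -2 * (g t) ^ 2 + 2 * f t * g t + 2 * t * g t - θoo with hG
  constructor
  · rw [hy_fun]
    convert hft using 1
    rw [hz_def, hΘ₀, hF]
    ring
  · have hz' : HasDerivAt z (F * f t / 2 * 2 - (F * g t + f t * G) + (F * t + f t * 1) + 0) t := by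
      rw [hz_fun]
      have h := ((((hft.pow 2).div_const 2).sub (hft.mul hgt)).add
        (hft.mul (hasDerivAt_id t))).add (hasDerivAt_const t κ₀)
      convert h using 1
      push_cast
      · rfl
      · rfl
      · rfl
      simp only [id]
      push_cast
      ring
    convert hz' using 1
    rw [hz_def, hy_def, hΘ₀, hΘoo, hF, hG]
    field_simp
    ring
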